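/- Let G = (S, E) be a path-complete labeled digraph on a finite alphabet Σ = {1, …, m} with S finite, let A₁, …, A_m ∈ ℝ^{n×n}, let r > 0, and suppose there exists V_S = {V_s : s ∈ S} ⊆ Lyap₀(ℝⁿ) such that V_a(x) ≥ V_b(r⁻¹ A_i x) for all x ∈ ℝⁿ and all edges (a, b, i) ∈ E. Then the joint spectral radius of {A₁, …, A_m} is at most r; precisely, limsup_{k → ∞} ( max over words (j₁, …, j_k) ∈ Σ^k of ‖A_{j_k} A_{j_{k−1}} ⋯ A_{j_1}‖ )^{1/k} ≤ r, where ‖·‖ is the operator norm induced by the Euclidean norm. -/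

import Mathlib

open Filter

/-- A labeled digraph on node type `S` with alphabet `A`, given by its edge set,
is path-complete if every nonempty word is the label sequence of some path. -/
def PathComplete {S A : Type*} (E : Set (S × S × A)) : Prop :=
  ∀ w : List A, w ≠ [] → ∃ s : Fin (w.length + 1) → S,
    ∀ j : Fin w.length, (s j.castSucc, s j.succ, w.get j) ∈ E

/-- `G₁` (edge set `E₁`) simulates `G₂` (edge set `E₂`). -/
def Simulates {S₁ S₂ A : Type*} (E₁ : Set (S₁ × S₁ × A)) (E₂ : Set (S₂ × S₂ × A)) : Prop :=
  ∃ R : S₂ → S₁, ∀ a b i, (a, b, i) ∈ E₂ → (R a, R b, i) ∈ E₁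

/-- Simulation where the simulating graph has node set `V₁` inside ambient type `N₁`. -/
def SimulatesOn {N₁ N₂ A : Type*} (V₁ : Set N₁) (E₁ : Set (N₁ × N₁ × A))
    (E₂ : Set (N₂ × N₂ × A)) : Prop :=
  ∃ R : N₂ → N₁, (∀ s, R s ∈ V₁) ∧ ∀ a b i, (a, b, i) ∈ E₂ → (R a, R b, i) ∈ E₁

/-- Class K∞ function. -/
def IsKInfty (α : ℝ → ℝ) : Prop :=
  Continuous α ∧ StrictMono α ∧ α 0 = 0 ∧ Tendsto α atTop atTop

/-- Membership in `Lyap₀(ℝⁿ)`. -/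
def IsLyap {n : ℕ} (V : EuclideanSpace ℝ (Fin n) → ℝ) : Prop :=
  Continuous V ∧ V 0 = 0 ∧ (∀ x, x ≠ 0 → 0 < V x) ∧
  ∃ α₁ α₂ : ℝ → ℝ, IsKInfty α₁ ∧ IsKInfty α₂ ∧ ∀ x, α₁ ‖x‖ ≤ V x ∧ V x ≤ α₂ ‖x‖

/-- `(V_s)_{s}` together with `γ` is admissible for the graph with edge set `E`
and the switched maps `f`. -/
def Admissible {S A : Type*} {n : ℕ} (E : Set (S × S × A))
    (f : A → EuclideanSpace ℝ (Fin n) → EuclideanSpace ℝ (Fin n))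
    (V : S → EuclideanSpace ℝ (Fin n) → ℝ) (γ : ℝ) : Prop :=
  ∀ a b i, (a, b, i) ∈ E → ∀ x, V a x ≥ γ * V b (f i x)

/-- Edge set of the `T`-sum lift: nodes are multisets of size `T`. -/
def sumLiftEdgesT {S A : Type*} (E : Set (S × S × A)) (T : ℕ) :
    Set (Multiset S × Multiset S × A) :=
  { e | ∃ L : List (S × S), L.length = T ∧ (∀ p ∈ L, (p.1, p.2, e.2.2) ∈ E) ∧
      e.1 = ↑(L.map Prod.fst) ∧ e.2.1 = ↑(L.map Prod.snd) }

/-- Edge set of the sum lift `G^⊕` (union over all `T ≥ 1`). -/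
def sumLiftEdges {S A : Type*} (E : Set (S × S × A)) : Set (Multiset S × Multiset S × A) :=
  ⋃ T ∈ Set.Ici 1, sumLiftEdgesT E T

/-- Edge set of the `T`-forward composition lift `G^{∘T}`; a word `(j₁, …, j_T)` is
encoded as the list `[j₁, …, j_T]`.  For `T = 0` this is `G` itself (with empty words). -/
def fwdLiftEdges {S A : Type*} (E : Set (S × S × A)) :
    ℕ → Set ((S × List A) × (S × List A) × A)
  | 0 => { e | ∃ (a b : S) (i : A), (a, b, i) ∈ E ∧ e = ((a, []), (b, []), i) }
  | T + 1 => { e | ∃ (a b : S) (i : A) (l : List A) (jT : A), (a, b, i) ∈ E ∧ l.length = T ∧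
      e = ((a, l ++ [jT]), (b, i :: l), jT) }

/-- Edge set of the `T`-backward composition lift `G^{∘-T}`. -/
def bwdLiftEdges {S A : Type*} (E : Set (S × S × A)) :
    ℕ → Set ((S × List A) × (S × List A) × A)
  | 0 => { e | ∃ (a b : S) (i : A), (a, b, i) ∈ E ∧ e = ((a, []), (b, []), i) }
  | T + 1 => { e | ∃ (a b : S) (i : A) (l : List A) (jT : A), (a, b, i) ∈ E ∧ l.length = T ∧
      e = ((a, i :: l), (b, l ++ [jT]), jT) }

/-- The underlying undirected graph on node set `V` with labeled edge set `E` is connected. -/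
def ConnectedOn {N A : Type*} (V : Set N) (E : Set (N × N × A)) : Prop :=
  ∀ x ∈ V, ∀ y ∈ V,
    Relation.ReflTransGen (fun u v => ∃ i, (u, v, i) ∈ E ∨ (v, u, i) ∈ E) x y

/-- Transpose of a labeled digraph (reverse all edges). -/
def transposeEdges {S A : Type*} (E : Set (S × S × A)) : Set (S × S × A) :=
  { e | (e.2.1, e.1, e.2.2) ∈ E }

/-- Strong connectedness of a labeled digraph. -/
def StronglyConnectedEdges {S A : Type*} (E : Set (S × S × A)) : Prop :=
  ∀ x y : S, Relation.ReflTransGen (fun u v => ∃ i, (u, v, i) ∈ E) x y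

open Topology
lemma myProdMapSmul {n : ℕ} (c : ℝ)
    (l : List (EuclideanSpace ℝ (Fin n) →L[ℝ] EuclideanSpace ℝ (Fin n)))
    (x : EuclideanSpace ℝ (Fin n)) :
    (l.map (fun f => c • f)).prod x = c ^ l.length • l.prod x := by
  induction l generalizing x with
  | nil => simp
  | cons f l ih =>
    rw [List.map_cons, List.prod_cons, List.prod_cons, ContinuousLinearMap.mul_apply,
      ContinuousLinearMap.mul_apply, ih, ContinuousLinearMap.smul_apply, map_smul,
      smul_smul, List.length_cons, pow_succ']

lemma myChain {n m : ℕ} {S : Type*} {E : Set (S × S × Fin m)}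
    {B : Fin m → EuclideanSpace ℝ (Fin n) →L[ℝ] EuclideanSpace ℝ (Fin n)}
    {V : S → EuclideanSpace ℝ (Fin n) → ℝ}
    (hadm : ∀ a b i, (a, b, i) ∈ E → ∀ x, V a x ≥ V b (B i x)) :
    ∀ (w : List (Fin m)) (s : ℕ → S),
      (∀ j, (h : j < w.length) → (s j, s (j+1), w[j]) ∈ E) →
      ∀ x, V (s w.length) (((w.map B).reverse.prod) x) ≤ V (s 0) x := by
  intro w
  induction w with
  | nil => intro s _ x; simp
  | cons i w ih =>
    intro s hs x
    have h0 : (s 0, s 1, i) ∈ E := hs 0 (by simp)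
    have h1 := ih (fun k => s (k+1)) (fun j hj => by
      have := hs (j+1) (by simpa using Nat.succ_lt_succ hj)
      simpa using this) (B i x)
    calc V (s (i :: w).length) (((i::w).map B).reverse.prod x)
        = V (s (w.length + 1)) ((w.map B).reverse.prod (B i x)) := by
          simp [List.prod_append, ContinuousLinearMap.mul_apply]
      _ ≤ V (s 1) (B i x) := h1
      _ ≤ V (s 0) x := hadm _ _ _ h0 x

/-- A path-complete Lyapunov function for the scaled maps `r⁻¹ Aᵢ`
certifies that the joint spectral radius of `{A₁, …, A_m}` is at most `r`:
`limsup_k (max over words of length k of ‖A_{j_k} ⋯ A_{j_1}‖)^{1/k} ≤ r`. -/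
theorem pclf_jsr_bound {n m : ℕ} (hm : 1 ≤ m) {S : Type*} [Fintype S]
    (E : Set (S × S × Fin m)) (hpc : PathComplete E)
    (A : Fin m → (EuclideanSpace ℝ (Fin n) →L[ℝ] EuclideanSpace ℝ (Fin n)))
    (r : ℝ) (hr : 0 < r)
    (V : S → EuclideanSpace ℝ (Fin n) → ℝ) (hV : ∀ s, IsLyap (V s))
    (hadm : ∀ a b i, (a, b, i) ∈ E → ∀ x, V a x ≥ V b (r⁻¹ • A i x)) :
    Filter.limsup (fun k : ℕ =>
        (⨆ j : Fin k → Fin m, ‖(List.ofFn fun t => A (j t)).reverse.prod‖) ^ ((1 : ℝ) / k))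
      Filter.atTop ≤ r := by
  have hm' : Nonempty (Fin m) := ⟨⟨0, hm⟩⟩
  -- S is nonempty
  obtain ⟨s₀, -⟩ := hpc [⟨0, hm⟩] (by simp)
  have hSne : Nonempty S := ⟨s₀ 0⟩
  -- bound C on the closed unit ball
  have hCs : ∀ s : S, ∃ z ∈ Metric.closedBall (0 : EuclideanSpace ℝ (Fin n)) 1,
      ∀ y ∈ Metric.closedBall (0 : EuclideanSpace ℝ (Fin n)) 1, V s y ≤ V s z := fun s =>
    (isCompact_closedBall 0 1).exists_isMaxOn ⟨0, by simp⟩ (hV s).1.continuousOn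
  choose z hz hz2 using hCs
  set C : ℝ := ⨆ s, V s (z s) with hCdef
  have hC : ∀ s : S, ∀ y : EuclideanSpace ℝ (Fin n), ‖y‖ ≤ 1 → V s y ≤ C := by
    intro s y hy
    refine le_trans (hz2 s y (by simpa [Metric.mem_closedBall, dist_eq_norm] using hy)) ?_
    exact le_ciSup (f := fun s => V s (z s)) (Set.Finite.bddAbove (Set.finite_range _)) s
  -- choose M so that V s y ≤ C forces ‖y‖ ≤ M
  have hkey : ∀ s : S, ∃ Ms : ℝ, ∀ y : EuclideanSpace ℝ (Fin n), Ms ≤ ‖y‖ → C < V s y := by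
    intro s
    obtain ⟨α₁, α₂, hα₁, hα₂, hb⟩ := (hV s).2.2.2
    obtain ⟨Ms, hMs⟩ := (hα₁.2.2.2.eventually_gt_atTop C).exists_forall_of_atTop
    exact ⟨Ms, fun y hy => lt_of_lt_of_le (hMs _ hy) (hb y).1⟩
  choose Ms hMs using hkey
  set M : ℝ := max 1 (⨆ s, Ms s) with hMdef
  have hM1 : (1 : ℝ) ≤ M := le_max_left _ _
  have hM : ∀ s : S, ∀ y : EuclideanSpace ℝ (Fin n), V s y ≤ C → ‖y‖ ≤ M := by
    intro s y hy
    by_contra hcon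
    push_neg at hcon
    have : Ms s ≤ ‖y‖ := le_trans (le_trans
      (le_ciSup (Set.Finite.bddAbove (Set.finite_range Ms)) s) (le_max_right _ _)) hcon.le
    exact absurd hy (not_le.mpr (hMs s y this))
  -- key norm bound for nonempty words
  have hbound : ∀ w : List (Fin m), w ≠ [] → ‖(w.map A).reverse.prod‖ ≤ M * r ^ w.length := by
    intro w hw
    obtain ⟨s, hs⟩ := hpc w hw
    set t : ℕ → S := fun j => s ⟨min j w.length, by omega⟩ with ht
    have hedges : ∀ j, (h : j < w.length) → (t j, t (j+1), w[j]) ∈ E := by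
      intro j hj
      have h1 := hs ⟨j, hj⟩
      have e1 : t j = s (⟨j, hj⟩ : Fin w.length).castSucc := by
        simp only [ht]; congr 1; exact Fin.ext (by simp [Nat.min_eq_left hj.le])
      have e2 : t (j+1) = s (⟨j, hj⟩ : Fin w.length).succ := by
        simp only [ht]; congr 1; exact Fin.ext (by simp [Nat.min_eq_left hj])
      have e3 : w[j] = w.get ⟨j, hj⟩ := by simp
      rw [e1, e2, e3]; exact h1
    have hadm' : ∀ a b i, (a, b, i) ∈ E → ∀ x,
        V a x ≥ V b ((fun i => r⁻¹ • A i) i x) := by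
      intro a b i h x; simpa using hadm a b i h x
    have hch := myChain hadm' w t hedges
    refine ContinuousLinearMap.opNorm_le_of_unit_norm (by positivity) ?_
    intro x hx
    have h2 : V (t w.length) ((w.map (fun i => r⁻¹ • A i)).reverse.prod x) ≤ C :=
      le_trans (hch x) (hC _ _ (le_of_eq hx))
    have h3 := hM _ _ h2
    have h4 : (w.map (fun i => r⁻¹ • A i)).reverse.prod x
        = (r ^ w.length)⁻¹ • ((w.map A).reverse.prod x) := by
      have e : (w.map (fun i => r⁻¹ • A i)).reverse
          = ((w.map A).reverse).map (fun f => r⁻¹ • f) := by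
        rw [List.map_reverse, List.map_map]
        rfl
      rw [e, myProdMapSmul, inv_pow]
      simp
    rw [h4, norm_smul, norm_inv, norm_pow, Real.norm_eq_abs, abs_of_pos hr] at h3
    have hrL : (0:ℝ) < r ^ w.length := pow_pos hr w.length
    calc ‖(w.map A).reverse.prod x‖
        = r ^ w.length * ((r ^ w.length)⁻¹ * ‖(w.map A).reverse.prod x‖) := by
          field_simp
      _ ≤ r ^ w.length * M := by
          exact mul_le_mul_of_nonneg_left h3 hrL.le
      _ = M * r ^ w.length := by rw [mul_comm]
  -- bound on the supremum
  have hsup : ∀ k : ℕ, 1 ≤ k →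
      (⨆ j : Fin k → Fin m, ‖(List.ofFn fun t => A (j t)).reverse.prod‖) ≤ M * r ^ k := by
    intro k hk
    refine ciSup_le fun j => ?_
    have e : (List.ofFn fun t => A (j t)) = (List.ofFn j).map A := by rw [List.map_ofFn]; rfl
    have hne : List.ofFn j ≠ [] := by
      simp only [ne_eq, List.ofFn_eq_nil_iff]
      omega
    have := hbound (List.ofFn j) hne
    rw [List.length_ofFn] at this
    rw [e]; exact this
  -- nonnegativity of terms
  set f : ℕ → ℝ := fun k =>
    (⨆ j : Fin k → Fin m, ‖(List.ofFn fun t => A (j t)).reverse.prod‖) ^ ((1 : ℝ) / k) with hf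
  have hf0 : ∀ k, 0 ≤ f k := fun k =>
    Real.rpow_nonneg (Real.iSup_nonneg fun j => norm_nonneg _) _
  have hM0 : (0:ℝ) < M := lt_of_lt_of_le one_pos hM1
  -- eventual bound f k ≤ M^(1/k) * r
  have hfg : ∀ k : ℕ, 1 ≤ k → f k ≤ M ^ ((1:ℝ)/k) * r := by
    intro k hk
    have hb : (0:ℝ) ≤ ⨆ j : Fin k → Fin m, ‖(List.ofFn fun t => A (j t)).reverse.prod‖ :=
      Real.iSup_nonneg fun j => norm_nonneg _
    have h1 : f k ≤ (M * r ^ k) ^ ((1:ℝ)/k) :=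
      Real.rpow_le_rpow hb (hsup k hk) (by positivity)
    refine h1.trans_eq ?_
    rw [Real.mul_rpow hM0.le (by positivity), ← Real.rpow_natCast r k,
      ← Real.rpow_mul hr.le]
    have : (k:ℝ) * ((1:ℝ)/k) = 1 := by
      field_simp
    rw [this, Real.rpow_one]
  -- the comparison sequence tends to r
  have hg : Tendsto (fun k : ℕ => M ^ ((1:ℝ)/k) * r) atTop (𝓝 r) := by
    have h1 : Tendsto (fun k : ℕ => Real.log M * ((1:ℝ)/k)) atTop (𝓝 0) := by
      simpa using tendsto_one_div_atTop_nhds_zero_nat.const_mul (Real.log M)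
    have h2 : Tendsto (fun k : ℕ => Real.exp (Real.log M * ((1:ℝ)/k))) atTop (𝓝 1) := by
      simpa [Function.comp_def] using (Real.continuous_exp.tendsto 0).comp h1
    have h3 : Tendsto (fun k : ℕ => M ^ ((1:ℝ)/k)) atTop (𝓝 1) := by
      refine h2.congr fun k => ?_
      rw [Real.rpow_def_of_pos hM0, mul_comm]
    simpa using h3.mul_const r
  -- conclude
  refine le_of_forall_pos_le_add fun ε hε => ?_
  have hcob : IsCoboundedUnder (· ≤ ·) atTop f :=
    isCoboundedUnder_le_of_le atTop (x := 0) hf0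
  refine Filter.limsup_le_of_le hcob ?_
  have hev1 : ∀ᶠ k : ℕ in atTop, M ^ ((1:ℝ)/k) * r < r + ε :=
    hg.eventually_lt_const (by linarith)
  filter_upwards [hev1, eventually_ge_atTop 1] with k h1 h2
  exact le_of_lt (lt_of_le_of_lt (hfg k h2) h1)
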